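/- Fix θ ∈ [0, π/2) with tan θ polynomial in n, ε > 0, capacity C > 0 and L = εC/(n(tan θ + 1)). Suppose nonnegative reals P₊, P₋, P_I and rounded values P̂₊, P̂₋, P̂_I satisfy max{P̂₊ − nL, 0} ≤ P₊ ≤ P̂₊, max{P̂₋ − nL, 0} ≤ P₋ ≤ P̂₋, max{P̂_I − nL, 0} ≤ P_I ≤ P̂_I, together with P_I ≤ C, P₋ ≤ C tan θ, P₊ ≤ C(1 + tan θ), and (P₊ − P₋)² + P_I² ≤ C². Then (P̂₊ − P̂₋)² + P̂_I² ≤ (1 + 2ε)² C². -/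

import Mathlib

set_option maxHeartbeats 1000000


theorem rounded_projection_bound (n : ℕ) (hn : 0 < n) (θ ε C : ℝ)
    (hθ0 : 0 ≤ θ) (hθ : θ < Real.pi / 2) (hε : 0 < ε) (hC : 0 < C)
    (L : ℝ) (hL : L = ε * C / (n * (Real.tan θ + 1)))
    (Pp Pm Pi Qp Qm Qi : ℝ)
    (hPp0 : 0 ≤ Pp) (hPm0 : 0 ≤ Pm) (hPi0 : 0 ≤ Pi)
    (hQp : max (Qp - n * L) 0 ≤ Pp ∧ Pp ≤ Qp)
    (hQm : max (Qm - n * L) 0 ≤ Pm ∧ Pm ≤ Qm)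
    (hQi : max (Qi - n * L) 0 ≤ Pi ∧ Pi ≤ Qi)
    (hI : Pi ≤ C) (hm : Pm ≤ C * Real.tan θ) (hp : Pp ≤ C * (1 + Real.tan θ))
    (hmag : (Pp - Pm) ^ 2 + Pi ^ 2 ≤ C ^ 2) :
    (Qp - Qm) ^ 2 + Qi ^ 2 ≤ (1 + 2 * ε) ^ 2 * C ^ 2 := by
  have ht : 0 ≤ Real.tan θ := Real.tan_nonneg_of_nonneg_of_le_pi_div_two hθ0 hθ.le
  have hn' : (0:ℝ) < n := by exact_mod_cast hn
  have ha : (n:ℝ) * L = ε * C / (Real.tan θ + 1) := by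
    rw [hL]; field_simp
  set a : ℝ := (n:ℝ) * L with ha'
  have ha0 : 0 ≤ a := by
    rw [ha]
    positivity
  have haε : a ≤ ε * C := by
    rw [ha]
    rw [div_le_iff₀ (by linarith)]
    nlinarith [mul_pos hε hC]
  have h1 : Qp - n * L ≤ Pp := le_trans (le_max_left _ _) hQp.1
  have h2 : Qm - n * L ≤ Pm := le_trans (le_max_left _ _) hQm.1
  have h3 : Qi - n * L ≤ Pi := le_trans (le_max_left _ _) hQi.1
  have h4 := hQp.2
  have h5 := hQm.2
  have h6 := hQi.2
  have hQi0 : 0 ≤ Qi := le_trans hPi0 h6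
  -- bounds
  have hd1 : Qp - Qm ≤ Pp - Pm + a := by linarith
  have hd2 : Pp - Pm - a ≤ Qp - Qm := by linarith
  have hQi' : Qi ≤ Pi + a := by linarith
  have he2 : (Pp - Pm) ^ 2 ≤ C ^ 2 := by nlinarith [sq_nonneg Pi]
  have heC1 : Pp - Pm ≤ C := by nlinarith [sq_nonneg (Pp - Pm - C)]
  have heC2 : -C ≤ Pp - Pm := by nlinarith [sq_nonneg (Pp - Pm + C)]
  have hfa1 : 0 ≤ a - (Qp - Qm - (Pp - Pm)) := by linarith
  have hfa2 : 0 ≤ a + (Qp - Qm - (Pp - Pm)) := by linarith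
  have hC1 : 0 ≤ C - (Pp - Pm) := by linarith
  have hC2 : 0 ≤ C + (Pp - Pm) := by linarith
  have hsq1 : (Qp - Qm) ^ 2 ≤ (Pp - Pm) ^ 2 + 2 * a * C + a ^ 2 := by
    nlinarith [mul_nonneg hC1 hfa2, mul_nonneg hC2 hfa1, mul_nonneg hfa1 hfa2]
  have hsq2 : Qi ^ 2 ≤ Pi ^ 2 + 2 * a * C + a ^ 2 := by
    nlinarith
  have k1 : a * C ≤ ε * C * C := mul_le_mul_of_nonneg_right haε hC.le
  have k2 : a * a ≤ ε * C * (ε * C) :=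
    mul_le_mul haε haε ha0 (by positivity)
  nlinarith
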